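/- Let χ be a Dirichlet character mod q induced by the primitive character χ* mod q_χ, and define B(χ,x) := Σ_{n ≤ x} (χ(n) - χ*(n))·Λ(n)·(x - n). Then for all x ≥ 1 and 0 < h ≤ x, |B(χ, x+h) - 2·B(χ,x) + B(χ, x-h)| ≤ ω(q)·h·log(2x), where ω(q) is the number of distinct prime divisors of q. -/

import Mathlib

/-- `B(χ,x) = Σ_{n ≤ x} (χ(n) - χ*(n)) Λ(n) (x - n)` where `χ*` induces `χ`. -/
noncomputable def Bfun {q q' : ℕ} (χ : DirichletCharacter ℂ q) (χ' : DirichletCharacter ℂ q')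
    (x : ℝ) : ℂ :=
  ∑ n ∈ Finset.Icc 1 ⌊x⌋₊,
    (χ (n : ZMod q) - χ' (n : ZMod q')) * (ArithmeticFunction.vonMangoldt n : ℂ) * ((x : ℂ) - n)

open Finset ArithmeticFunction

private lemma kernel_abs_le (u h : ℝ) (hh : 0 ≤ h) :
    |max (u + h) 0 - 2 * max u 0 + max (u - h) 0| ≤ h := by
  have h1 : max u 0 ≤ max (u + h) 0 := max_le_max (by linarith) le_rfl
  have h2 : max (u - h) 0 ≤ max u 0 := max_le_max (by linarith) le_rfl
  have h3 : max (u + h) 0 - max u 0 ≤ h := by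
    calc max (u + h) 0 - max u 0 ≤ |max (u + h) 0 - max u 0| := le_abs_self _
      _ ≤ |(u + h) - u| := abs_max_sub_max_le_abs _ _ _
      _ = h := by rw [add_sub_cancel_left, abs_of_nonneg hh]
  have h4 : max u 0 - max (u - h) 0 ≤ h := by
    calc max u 0 - max (u - h) 0 ≤ |max u 0 - max (u - h) 0| := le_abs_self _
      _ ≤ |u - (u - h)| := abs_max_sub_max_le_abs _ _ _
      _ = h := by rw [sub_sub_cancel, abs_of_nonneg hh]
  rw [abs_le]; constructor <;> linarith

private lemma Bfun_eq_max {q q' : ℕ} (χ : DirichletCharacter ℂ q)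
    (χ' : DirichletCharacter ℂ q') (y : ℝ) (hy : 0 ≤ y) (N : ℕ) (hN : ⌊y⌋₊ ≤ N) :
    Bfun χ χ' y = ∑ n ∈ Finset.Icc 1 N,
      (χ (n : ZMod q) - χ' (n : ZMod q')) * (Λ n : ℂ) * ((max (y - n) 0 : ℝ) : ℂ) := by
  rw [Bfun, ← Finset.sum_subset (Finset.Icc_subset_Icc_right hN)]
  · refine Finset.sum_congr rfl fun n hn => ?_
    rw [Finset.mem_Icc] at hn
    have hny : (n : ℝ) ≤ y := (Nat.le_floor_iff hy).mp hn.2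
    rw [max_eq_left (by linarith)]
    push_cast
    ring
  · intro n hn hn'
    rw [Finset.mem_Icc] at hn hn'
    have : ⌊y⌋₊ < n := by
      by_contra hcon
      exact hn' ⟨hn.1, le_of_not_gt hcon⟩
    have : y < n := by
      calc y < (⌊y⌋₊ + 1 : ℕ) := by
              push_cast; exact Nat.lt_floor_add_one y
        _ ≤ (n : ℝ) := by exact_mod_cast this
    rw [max_eq_right (by linarith)]
    simp

theorem second_diff_B_bound (q q' : ℕ) [NeZero q] [NeZero q'] (hdvd : q' ∣ q)
    (χ' : DirichletCharacter ℂ q') (hχ' : χ'.IsPrimitive)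
    (χ : DirichletCharacter ℂ q) (hind : χ = DirichletCharacter.changeLevel hdvd χ')
    (x h : ℝ) (hx : 1 ≤ x) (hh : 0 < h) (hhx : h ≤ x) :
    ‖Bfun χ χ' (x + h) - 2 * Bfun χ χ' x + Bfun χ χ' (x - h)‖
      ≤ q.primeFactors.card * h * Real.log (2 * x) := by
  classical
  set N : ℕ := ⌊x + h⌋₊ with hNdef
  have hN1 : 1 ≤ N := Nat.le_floor (by push_cast; linarith)
  have hNle : (N : ℝ) ≤ 2 * x := le_trans (Nat.floor_le (by linarith)) (by linarith)
  have hlog2x : 0 ≤ Real.log (2 * x) := Real.log_nonneg (by linarith)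
  -- rewrite the three Bfun values over the common index set `Icc 1 N`
  have hB1 := Bfun_eq_max χ χ' (x + h) (by linarith) N le_rfl
  have hB2 := Bfun_eq_max χ χ' x (by linarith) N (Nat.floor_le_floor (by linarith))
  have hB3 := Bfun_eq_max χ χ' (x - h) (by linarith) N
    (le_trans (Nat.floor_le_floor (by linarith)) le_rfl)
  set c : ℕ → ℂ := fun n => χ (n : ZMod q) - χ' (n : ZMod q') with hc
  set K : ℕ → ℝ := fun n =>
    max (x + h - n) 0 - 2 * max (x - n) 0 + max (x - h - n) 0 with hK
  have hcomb : Bfun χ χ' (x + h) - 2 * Bfun χ χ' x + Bfun χ χ' (x - h)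
      = ∑ n ∈ Finset.Icc 1 N, c n * (Λ n : ℂ) * ((K n : ℝ) : ℂ) := by
    rw [hB1, hB2, hB3, Finset.mul_sum, ← Finset.sum_sub_distrib, ← Finset.sum_add_distrib]
    refine Finset.sum_congr rfl fun n hn => ?_
    simp only [hK]
    push_cast
    ring
  rw [hcomb]
  -- pointwise bound on |c n|
  have hcbound : ∀ n : ℕ, ‖c n‖ ≤ 1 := by
    intro n
    by_cases hco : Nat.Coprime n q
    · have hu : IsUnit ((n : ℕ) : ZMod q) := (ZMod.isUnit_iff_coprime n q).mpr hco
      obtain ⟨a, ha⟩ := hu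
      have : χ (n : ZMod q) = χ' (n : ZMod q') := by
        rw [hind, ← ha, DirichletCharacter.changeLevel_eq_cast_of_dvd χ' hdvd a, ha,
          ZMod.cast_natCast hdvd]
      simp [hc, this]
    · have : c n = -χ' (n : ZMod q') := by
        have h0 : χ (n : ZMod q) = 0 :=
          χ.map_nonunit (fun hu => hco ((ZMod.isUnit_iff_coprime n q).mp hu))
        simp [hc, h0]
      rw [this, norm_neg]
      exact χ'.norm_le_one _
  have hczero : ∀ n : ℕ, Nat.Coprime n q → c n = 0 := by
    intro n hco
    have hu : IsUnit ((n : ℕ) : ZMod q) := (ZMod.isUnit_iff_coprime n q).mpr hco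
    obtain ⟨a, ha⟩ := hu
    have : χ (n : ZMod q) = χ' (n : ZMod q') := by
      rw [hind, ← ha, DirichletCharacter.changeLevel_eq_cast_of_dvd χ' hdvd a, ha,
        ZMod.cast_natCast hdvd]
    simp [hc, this]
  -- the support set
  set T : Finset ℕ := (Finset.Icc 1 N).filter (fun n => ¬ Nat.Coprime n q ∧ Λ n ≠ 0) with hT
  have step1 : ‖∑ n ∈ Finset.Icc 1 N, c n * (Λ n : ℂ) * ((K n : ℝ) : ℂ)‖
      ≤ (∑ n ∈ T, Λ n) * h := by
    calc ‖∑ n ∈ Finset.Icc 1 N, c n * (Λ n : ℂ) * ((K n : ℝ) : ℂ)‖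
        ≤ ∑ n ∈ Finset.Icc 1 N, ‖c n * (Λ n : ℂ) * ((K n : ℝ) : ℂ)‖ :=
          norm_sum_le _ _
      _ ≤ ∑ n ∈ Finset.Icc 1 N,
            (if ¬ Nat.Coprime n q ∧ Λ n ≠ 0 then Λ n * h else 0) := by
          refine Finset.sum_le_sum fun n hn => ?_
          by_cases hP : ¬ Nat.Coprime n q ∧ Λ n ≠ 0
          · rw [if_pos hP]
            rw [norm_mul, norm_mul]
            have h1 : ‖(Λ n : ℂ)‖ = Λ n := by
              rw [Complex.norm_real, Real.norm_eq_abs, abs_of_nonneg vonMangoldt_nonneg]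
            have h2 : ‖((K n : ℝ) : ℂ)‖ ≤ h := by
              rw [Complex.norm_real, Real.norm_eq_abs]
              simp only [hK]
              rw [show x + h - (n:ℝ) = x - n + h by ring,
                show x - h - (n:ℝ) = x - n - h by ring]
              exact kernel_abs_le (x - n) h hh.le
            calc ‖c n‖ * ‖(Λ n : ℂ)‖ * ‖((K n : ℝ) : ℂ)‖
                ≤ 1 * Λ n * h := by
                  refine mul_le_mul (mul_le_mul (hcbound n) (le_of_eq h1)
                    (norm_nonneg _) zero_le_one) h2 (norm_nonneg _) ?_
                  simpa using (vonMangoldt_nonneg : (0:ℝ) ≤ Λ n)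
              _ = Λ n * h := by ring
          · rw [if_neg hP]
            push_neg at hP
            by_cases hco : Nat.Coprime n q
            · simp [hczero n hco]
            · simp [hP hco]
      _ = ∑ n ∈ T, Λ n * h := (Finset.sum_filter _ _).symm
      _ = (∑ n ∈ T, Λ n) * h := by rw [← Finset.sum_mul]
  -- sum of Λ over T is at most ω(q) log(2x)
  have hmap : ∀ n ∈ T, n.minFac ∈ q.primeFactors := by
    intro n hn
    rw [hT, Finset.mem_filter] at hn
    obtain ⟨hn1, hnc, hnΛ⟩ := hn
    obtain ⟨p, k, hp, hk, rfl⟩ := vonMangoldt_ne_zero_iff.mp hnΛ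
    rw [← Nat.prime_iff] at hp
    have hmf : (p ^ k).minFac = p := hp.pow_minFac hk.ne'
    rw [hmf, Nat.mem_primeFactors]
    refine ⟨hp, ?_, NeZero.ne q⟩
    -- p divides q since gcd(p^k, q) ≠ 1
    have hg : Nat.gcd (p ^ k) q ≠ 1 := hnc
    obtain ⟨r, hr, hrd⟩ := Nat.exists_prime_and_dvd hg
    have hrn : r ∣ p ^ k := hrd.trans (Nat.gcd_dvd_left _ _)
    have hrq : r ∣ q := hrd.trans (Nat.gcd_dvd_right _ _)
    have : r = p := by
      have := hr.dvd_of_dvd_pow hrn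
      exact (Nat.prime_dvd_prime_iff_eq hr hp).mp this
    rwa [this] at hrq
  have step2 : (∑ n ∈ T, Λ n) ≤ (q.primeFactors.card : ℝ) * Real.log (2 * x) := by
    rw [← Finset.sum_fiberwise_of_maps_to hmap (fun n => Λ n)]
    have hfiber : ∀ p ∈ q.primeFactors,
        (∑ n ∈ T.filter (fun n => n.minFac = p), Λ n) ≤ Real.log (2 * x) := by
      intro p hp
      have hpp : p.Prime := Nat.prime_of_mem_primeFactors hp
      set Kp : ℕ := Nat.log p N with hKp
      have hsub : T.filter (fun n => n.minFac = p)
          ⊆ (Finset.Icc 1 Kp).image (fun k => p ^ k) := by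
        intro n hn
        rw [Finset.mem_filter, hT, Finset.mem_filter] at hn
        obtain ⟨⟨hnIcc, hnc, hnΛ⟩, hnmf⟩ := hn
        obtain ⟨r, k, hr, hk, rfl⟩ := vonMangoldt_ne_zero_iff.mp hnΛ
        rw [← Nat.prime_iff] at hr
        have hrp : r = p := by rw [← hnmf, hr.pow_minFac hk.ne']
        subst hrp
        rw [Finset.mem_image]
        refine ⟨k, ?_, rfl⟩
        rw [Finset.mem_Icc]
        refine ⟨hk, ?_⟩
        rw [Finset.mem_Icc] at hnIcc
        exact (Nat.le_log_iff_pow_le hpp.one_lt (by omega)).mpr hnIcc.2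
      have hsum : (∑ n ∈ T.filter (fun n => n.minFac = p), Λ n)
          ≤ ∑ n ∈ (Finset.Icc 1 Kp).image (fun k => p ^ k), Λ n :=
        Finset.sum_le_sum_of_subset_of_nonneg hsub (fun _ _ _ => vonMangoldt_nonneg)
      have hinj : ∀ a ∈ Finset.Icc 1 Kp, ∀ b ∈ Finset.Icc 1 Kp,
          p ^ a = p ^ b → a = b := by
        intro a _ b _ hab
        exact Nat.pow_right_injective hpp.two_le hab
      have himg : (∑ n ∈ (Finset.Icc 1 Kp).image (fun k => p ^ k), Λ n)
          = ∑ k ∈ Finset.Icc 1 Kp, Λ (p ^ k) := Finset.sum_image hinj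
      have hval : ∀ k ∈ Finset.Icc 1 Kp, Λ (p ^ k) = Real.log p := by
        intro k hk
        rw [Finset.mem_Icc] at hk
        rw [vonMangoldt_apply_pow (by omega), vonMangoldt_apply_prime hpp]
      calc (∑ n ∈ T.filter (fun n => n.minFac = p), Λ n)
          ≤ ∑ k ∈ Finset.Icc 1 Kp, Λ (p ^ k) := by rw [← himg]; exact hsum
        _ = Kp * Real.log p := by
            rw [Finset.sum_congr rfl hval, Finset.sum_const, Nat.card_Icc]
            simp [nsmul_eq_mul]
        _ = Real.log ((p : ℝ) ^ Kp) := by rw [Real.log_pow]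
        _ ≤ Real.log (2 * x) := by
            apply Real.log_le_log (pow_pos (by exact_mod_cast hpp.pos) _)
            calc ((p : ℝ) ^ Kp) = ((p ^ Kp : ℕ) : ℝ) := by push_cast; ring
              _ ≤ (N : ℝ) := by
                  exact_mod_cast Nat.pow_log_le_self p (by omega)
              _ ≤ 2 * x := hNle
    calc (∑ p ∈ q.primeFactors, ∑ n ∈ T.filter (fun n => n.minFac = p), Λ n)
        ≤ ∑ _p ∈ q.primeFactors, Real.log (2 * x) := Finset.sum_le_sum hfiber
      _ = (q.primeFactors.card : ℝ) * Real.log (2 * x) := by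
          rw [Finset.sum_const, nsmul_eq_mul]
  calc ‖∑ n ∈ Finset.Icc 1 N, c n * (Λ n : ℂ) * ((K n : ℝ) : ℂ)‖
      ≤ (∑ n ∈ T, Λ n) * h := step1
    _ ≤ ((q.primeFactors.card : ℝ) * Real.log (2 * x)) * h :=
        mul_le_mul_of_nonneg_right step2 hh.le
    _ = q.primeFactors.card * h * Real.log (2 * x) := by ring
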